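/- Let p be a prime, let G be the direct sum of d copies of the Prüfer quasicyclic group ℤ(p^∞), and let φ : G → G be an endomorphism whose Reidemeister number is finite, i.e., the quotient of G by the image of the endomorphism a ↦ a - φ(a) is finite. Then the fixed-point subgroup C(φ) = {a ∈ G : φ(a) = a} is finite. -/

import Mathlib

/-- The group `ℚ/ℤ`. -/
abbrev QModZ : Type := ℚ ⧸ AddSubgroup.zmultiples (1 : ℚ)

/-- The Prüfer quasicyclic `p`-group `ℤ(p^∞)`, realized as the `p`-primary component
of `ℚ/ℤ` (the subgroup of elements of `p`-power order). -/
abbrev ZpInfty (p : ℕ) [Fact p.Prime] : AddSubgroup QModZ :=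
  AddCommGroup.primaryComponent QModZ p


section Abstract

variable {G : Type*} [AddCommGroup G] (p : ℕ)

/-- The subgroup of elements killed by `p ^ n`. -/
def pTor (n : ℕ) : AddSubgroup G where
  carrier := {x | p ^ n • x = 0}
  zero_mem' := by simp
  add_mem' := by intro a b ha hb; simp only [Set.mem_setOf_eq, smul_add] at *; rw [ha, hb, add_zero]
  neg_mem' := by intro a ha; simp only [Set.mem_setOf_eq, smul_neg] at *; rw [ha, neg_zero]

lemma mem_pTor' {p n : ℕ} {x : G} : x ∈ pTor p n ↔ p ^ n • x = 0 := Iff.rfl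

lemma pTor_mono {m n : ℕ} (h : m ≤ n) : pTor (G := G) p m ≤ pTor p n := by
  intro x hx
  rw [mem_pTor'] at hx ⊢
  calc p ^ n • x = p ^ (n - m) • p ^ m • x := by rw [smul_smul, ← pow_add, Nat.sub_add_cancel h]
  _ = 0 := by rw [hx, smul_zero]

end Abstract

section Abstract2

variable {G : Type*} [AddCommGroup G] {p : ℕ}

/-- Multiplication by `p ^ n` as a hom from `pTor p (n+1)` to `pTor p 1`. -/
def pTorHom (p n : ℕ) : (pTor (G := G) p (n + 1)) →+ (pTor (G := G) p 1) where
  toFun x := ⟨p ^ n • (x : G), by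
    rw [mem_pTor', smul_smul, pow_one, ← pow_succ']
    exact mem_pTor'.mp x.2⟩
  map_zero' := by ext; simp
  map_add' := by intro a b; ext; simp [smul_add]

lemma pTorHom_ker_inj (p n : ℕ) :
    ∀ x y : (pTorHom (G := G) p n).ker, x.1.1 = y.1.1 → x = y := by
  intro x y h
  exact Subtype.ext (Subtype.ext h)

/-- The map from the kernel of `pTorHom` into `pTor p n`. -/
def pTorKerMap (p n : ℕ) : (pTorHom (G := G) p n).ker → pTor (G := G) p n := fun x =>
  ⟨x.1.1, by
    rw [mem_pTor']
    have := x.2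
    rw [AddMonoidHom.mem_ker] at this
    exact congrArg Subtype.val this⟩

lemma pTorKerMap_inj (p n : ℕ) : Function.Injective (pTorKerMap (G := G) p n) := by
  intro x y h
  have h2 := congrArg (Subtype.val (p := fun z : G => z ∈ pTor p n)) h
  exact pTorHom_ker_inj p n x y h2

lemma pTor_finite (p : ℕ) (hfin : Finite {x : G // p • x = 0}) (n : ℕ) :
    Finite (pTor (G := G) p n) := by
  induction n with
  | zero =>
    refine Finite.of_injective (fun x : pTor (G := G) p 0 => (0 : Fin 1)) ?_
    intro x y _
    have hx := mem_pTor'.mp x.2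
    have hy := mem_pTor'.mp y.2
    rw [pow_zero, one_smul] at hx hy
    ext
    rw [hx, hy]
  | succ n ih =>
    have h1 : Finite (pTor (G := G) p 1) := by
      refine Finite.of_injective (fun x : pTor (G := G) p 1 =>
        (⟨(x : G), by have := mem_pTor'.mp x.2; rwa [pow_one] at this⟩ : {x : G // p • x = 0})) ?_
      intro x y h
      ext
      simpa using congrArg Subtype.val h
    have hker : Finite (pTorHom (G := G) p n).ker :=
      Finite.of_injective _ (pTorKerMap_inj (G := G) p n)
    have hquot : Finite ((pTor (G := G) p (n+1)) ⧸ (pTorHom (G := G) p n).ker) := by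
      have : Finite (pTorHom (G := G) p n).range := Subtype.finite
      exact Finite.of_equiv _ (QuotientAddGroup.quotientKerEquivRange (pTorHom p n)).symm.toEquiv
    exact Finite.of_equiv _
      (AddSubgroup.addGroupEquivQuotientProdAddSubgroup (s := (pTorHom (G := G) p n).ker)).symm

lemma card_pTor_succ_le (p : ℕ) (hfin : Finite {x : G // p • x = 0}) (n : ℕ) :
    Nat.card (pTor (G := G) p (n+1)) ≤ Nat.card (pTor (G := G) p n) * Nat.card (pTor (G := G) p 1) := by
  have h1 := pTor_finite (G := G) p hfin 1
  have hn := pTor_finite (G := G) p hfin n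
  have hsucc := pTor_finite (G := G) p hfin (n+1)
  rw [AddSubgroup.card_eq_card_quotient_mul_card_addSubgroup (pTorHom (G := G) p n).ker]
  have hq : Nat.card ((pTor (G := G) p (n+1)) ⧸ (pTorHom (G := G) p n).ker)
      = Nat.card (pTorHom (G := G) p n).range :=
    Nat.card_congr (QuotientAddGroup.quotientKerEquivRange (pTorHom p n)).toEquiv
  rw [hq, mul_comm]
  refine Nat.mul_le_mul ?_ ?_
  · exact Nat.card_le_card_of_injective _ (pTorKerMap_inj (G := G) p n)
  · exact AddSubgroup.card_le_card_addGroup _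

lemma card_pTor_add_le (p : ℕ) (hfin : Finite {x : G // p • x = 0}) (k t : ℕ) :
    Nat.card (pTor (G := G) p (k + t)) ≤ Nat.card (pTor (G := G) p k) * (Nat.card (pTor (G := G) p 1)) ^ t := by
  induction t with
  | zero => simp
  | succ t ih =>
    calc Nat.card (pTor (G := G) p (k + t + 1))
        ≤ Nat.card (pTor (G := G) p (k + t)) * Nat.card (pTor (G := G) p 1) :=
          card_pTor_succ_le p hfin (k + t)
      _ ≤ Nat.card (pTor (G := G) p k) * (Nat.card (pTor (G := G) p 1)) ^ t * Nat.card (pTor (G := G) p 1) :=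
          Nat.mul_le_mul_right _ ih
      _ = Nat.card (pTor (G := G) p k) * (Nat.card (pTor (G := G) p 1)) ^ (t + 1) := by ring

end Abstract2

section Main

variable {G : Type*} [AddCommGroup G]

theorem addKer_finite_of_coker_finite (p : ℕ) (hp : 0 < p)
    (htor : ∀ x : G, ∃ n, p ^ n • x = 0)
    (hdiv : ∀ n : ℕ, 0 < n → ∀ x : G, ∃ y : G, n • y = x)
    (hfin : Finite {x : G // p • x = 0})
    (ψ : G →+ G) (hR : Finite (G ⧸ ψ.range)) :
    Finite ψ.ker := by
  classical
  have hfinS : ∀ n, Finite (pTor (G := G) p n) := pTor_finite p hfin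
  -- ψ is surjective
  have hsurj : ∀ x : G, x ∈ ψ.range := by
    intro x
    have hN : 0 < Nat.card (G ⧸ ψ.range) := Nat.card_pos
    obtain ⟨y, hy⟩ := hdiv _ hN x
    have h0 : (QuotientAddGroup.mk' ψ.range) x = 0 := by
      rw [← hy, map_nsmul]
      exact card_nsmul_eq_zero'
    exact (QuotientAddGroup.eq_zero_iff x).mp h0
  set T : ℕ → AddSubgroup G := fun m => (pTor (G := G) p m).map ψ with hT
  have hTmono : ∀ {a b : ℕ}, a ≤ b → T a ≤ T b := fun h => AddSubgroup.map_mono (pTor_mono p h)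
  -- choose `n₁` such that every `p`-torsion element is hit from `pTor p n₁`
  have hx1 : ∀ x : (pTor (G := G) p 1), ∃ m, (x : G) ∈ T m := by
    intro x
    obtain ⟨z, hz⟩ := hsurj (x : G)
    obtain ⟨m, hm⟩ := htor z
    exact ⟨m, AddSubgroup.mem_map.mpr ⟨z, mem_pTor'.mpr hm, hz⟩⟩
  choose F hF using hx1
  have : Fintype (pTor (G := G) p 1) := Fintype.ofFinite _
  set n₁ := Finset.univ.sup F with hn₁
  have hS1T : ∀ x : G, x ∈ pTor p 1 → x ∈ T n₁ := by
    intro x hx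
    exact hTmono (Finset.le_sup (Finset.mem_univ (⟨x, hx⟩ : pTor (G := G) p 1))) (hF ⟨x, hx⟩)
  -- key induction: `pTor p k ⊆ ψ '' (pTor p (n₁ + k))`
  have key : ∀ k, pTor (G := G) p k ≤ T (n₁ + k) := by
    intro k
    induction k with
    | zero =>
      intro x hx
      have hx0 : x = 0 := by simpa using mem_pTor'.mp hx
      rw [hx0]; exact zero_mem _
    | succ k ih =>
      intro x hx
      have hpx : p • x ∈ pTor (G := G) p k := by
        rw [mem_pTor'] at hx ⊢
        rw [smul_smul, ← pow_succ]
        exact hx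
      obtain ⟨w, hw, hww⟩ := AddSubgroup.mem_map.mp (ih hpx)
      obtain ⟨w', hw'⟩ := hdiv p hp w
      have hw'mem : w' ∈ pTor (G := G) p (n₁ + k + 1) := by
        rw [mem_pTor', pow_succ, mul_smul, hw']
        exact mem_pTor'.mp hw
      have hdiff : x - ψ w' ∈ pTor (G := G) p 1 := by
        rw [mem_pTor', pow_one, smul_sub, ← map_nsmul, hw', hww, sub_self]
      obtain ⟨u, hu, huu⟩ := AddSubgroup.mem_map.mp (hS1T _ hdiff)
      refine AddSubgroup.mem_map.mpr ⟨w' + u, ?_, ?_⟩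
      · exact add_mem hw'mem (pTor_mono p (by omega) hu)
      · rw [map_add, huu]
        abel
  -- counting
  set K : ℕ → AddSubgroup G := fun m => ψ.ker ⊓ pTor p m with hK
  have hfinT : ∀ m, Finite (T m) := by
    intro m
    have := hfinS m
    have h' : (T m : Set G).Finite := by
      rw [hT]
      simp only [AddSubgroup.coe_map]
      exact Set.Finite.image ψ (Set.toFinite _)
    exact h'.to_subtype
  have hKfin : ∀ m, Finite (K m) := by
    intro m
    have := hfinS m
    exact Finite.of_injective
      (fun x : K m => (⟨x.1, (AddSubgroup.mem_inf.mp x.2).2⟩ : pTor (G := G) p m))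
      (fun a b h => Subtype.ext (congrArg (Subtype.val (p := fun z : G => z ∈ pTor p m)) h))
  have hcard : ∀ m, Nat.card (pTor (G := G) p m) = Nat.card (T m) * Nat.card (K m) := by
    intro m
    have hfm := hfinS m
    set g : (pTor (G := G) p m) →+ G := ψ.comp (pTor (G := G) p m).subtype with hg
    have hrange : g.range = T m := by
      rw [hg, AddMonoidHom.range_comp, AddSubgroup.range_subtype]
    have e1 : Nat.card (pTor (G := G) p m)
        = Nat.card ((pTor (G := G) p m) ⧸ g.ker) * Nat.card g.ker :=
      AddSubgroup.card_eq_card_quotient_mul_card_addSubgroup _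
    have e2 : Nat.card ((pTor (G := G) p m) ⧸ g.ker) = Nat.card (T m) := by
      rw [← hrange]
      exact Nat.card_congr (QuotientAddGroup.quotientKerEquivRange g).toEquiv
    have e3 : Nat.card g.ker = Nat.card (K m) := by
      refine Nat.card_congr ⟨fun x => ⟨x.1.1, AddSubgroup.mem_inf.mpr ⟨x.2, x.1.2⟩⟩,
        fun y => ⟨⟨y.1, (AddSubgroup.mem_inf.mp y.2).2⟩, (AddSubgroup.mem_inf.mp y.2).1⟩,
        fun x => rfl, fun y => rfl⟩
    rw [e1, e2, e3]
  set B := Nat.card (pTor (G := G) p 1) ^ n₁ with hB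
  have hKb : ∀ k, Nat.card (K (n₁ + k)) ≤ B := by
    intro k
    have hfk := hfinS k
    have h1 : Nat.card (pTor (G := G) p k) * Nat.card (K (n₁ + k))
        ≤ Nat.card (pTor (G := G) p (n₁ + k)) := by
      rw [hcard (n₁ + k)]
      refine Nat.mul_le_mul_right _ ?_
      have := hfinT (n₁ + k)
      exact AddSubgroup.card_le_of_le (key k)
    have h2 : Nat.card (pTor (G := G) p (n₁ + k)) ≤ Nat.card (pTor (G := G) p k) * B := by
      rw [Nat.add_comm n₁ k, hB]
      exact card_pTor_add_le p hfin k n₁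
    have hpos : 0 < Nat.card (pTor (G := G) p k) := Nat.card_pos
    exact Nat.le_of_mul_le_mul_left (le_trans h1 h2) hpos
  have hKmono : ∀ {i j : ℕ}, i ≤ j → K i ≤ K j := fun h => inf_le_inf_left _ (pTor_mono p h)
  set a : ℕ → ℕ := fun m => Nat.card (K m) with ha
  have hamono : ∀ {i j : ℕ}, i ≤ j → a i ≤ a j := by
    intro i j h
    have := hKfin j
    exact AddSubgroup.card_le_of_le (hKmono h)
  have hbdd : ∀ m, a m ≤ B := by
    intro m
    exact le_trans (hamono (Nat.le_add_left m n₁)) (hKb m)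
  have hne : (Set.range a).Nonempty := ⟨a 0, ⟨0, rfl⟩⟩
  have hbdd' : BddAbove (Set.range a) := ⟨B, by rintro _ ⟨m, rfl⟩; exact hbdd m⟩
  obtain ⟨m₀, hm₀⟩ := Nat.sSup_mem hne hbdd'
  have hstab : ∀ m, m₀ ≤ m → K m = K m₀ := by
    intro m hm
    have h1 : K m₀ ≤ K m := hKmono hm
    have h2 : Nat.card (K m) ≤ Nat.card (K m₀) := by
      have : a m ≤ sSup (Set.range a) := le_csSup hbdd' ⟨m, rfl⟩
      rw [← hm₀] at this
      exact this
    have := hKfin m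
    exact (AddSubgroup.eq_of_le_of_card_ge h1 h2).symm
  have hker : ψ.ker = K m₀ := by
    apply le_antisymm
    · intro x hx
      obtain ⟨m, hm⟩ := htor x
      have hxm : x ∈ K (m₀ + m) := AddSubgroup.mem_inf.mpr
        ⟨hx, pTor_mono p (Nat.le_add_left m m₀) (mem_pTor'.mpr hm)⟩
      rw [hstab (m₀ + m) (Nat.le_add_right _ _)] at hxm
      exact hxm
    · exact inf_le_left
  rw [hker]
  exact hKfin m₀

end Main

section Prufer

variable (p : ℕ) [Fact p.Prime]

lemma ZpInfty_tor (a : ZpInfty p) : ∃ k, p ^ k • a = 0 := by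
  obtain ⟨k, hk⟩ := a.2
  refine ⟨k, Subtype.ext ?_⟩
  have : p ^ k • (a : QModZ) = 0 := by rw [← hk]
  simpa using this

lemma ZpInfty_pdiv (a : ZpInfty p) : ∃ b : ZpInfty p, p • b = a := by
  obtain ⟨k, hka⟩ := ZpInfty_tor p a
  obtain ⟨q, hq⟩ := QuotientAddGroup.mk_surjective (a : QModZ)
  have hp0 : (p : ℚ) ≠ 0 := Nat.cast_ne_zero.mpr (Fact.out : p.Prime).pos.ne'
  have hb0 : p • (QuotientAddGroup.mk (q / p) : QModZ) = (a : QModZ) := by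
    rw [← QuotientAddGroup.mk_nsmul, ← hq]
    congr 1
    rw [nsmul_eq_mul]
    field_simp
  have hka' : p ^ k • (a : QModZ) = 0 := by
    have := congrArg (Subtype.val) hka
    simpa using this
  have hb0mem : (QuotientAddGroup.mk (q / p) : QModZ) ∈ ZpInfty p := by
    refine ⟨k + 1, ?_⟩
    rw [pow_succ, mul_smul, hb0, hka']
  exact ⟨⟨_, hb0mem⟩, Subtype.ext hb0⟩

lemma ZpInfty_ppow_div (i : ℕ) (a : ZpInfty p) : ∃ b : ZpInfty p, p ^ i • b = a := by
  induction i generalizing a with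
  | zero => exact ⟨a, by simp⟩
  | succ i ih =>
    obtain ⟨c, hc⟩ := ZpInfty_pdiv p a
    obtain ⟨b, hb⟩ := ih c
    exact ⟨b, by rw [pow_succ', mul_smul, hb, hc]⟩

lemma ZpInfty_div (n : ℕ) (hn : 0 < n) (a : ZpInfty p) : ∃ b : ZpInfty p, n • b = a := by
  obtain ⟨k, hk⟩ := ZpInfty_tor p a
  have hp : p.Prime := Fact.out
  set i := n.factorization p with hi
  set m := n / p ^ i with hm
  have hnm : p ^ i * m = n := Nat.ordProj_mul_ordCompl_eq_self n p
  have hnd : ¬ p ∣ m := Nat.not_dvd_ordCompl hp hn.ne'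
  have hcop : Nat.Coprime m (p ^ k) :=
    (((Nat.Prime.coprime_iff_not_dvd hp).mpr hnd).symm).pow_right k
  have hgcd : Int.gcd (m : ℤ) ((p : ℤ) ^ k) = 1 := by
    rw [← Nat.cast_pow, Int.gcd_natCast_natCast]
    exact hcop
  have hbez : (1 : ℤ) = (m : ℤ) * Int.gcdA (m : ℤ) ((p : ℤ) ^ k)
      + (p : ℤ) ^ k * Int.gcdB (m : ℤ) ((p : ℤ) ^ k) := by
    have h := Int.gcd_eq_gcd_ab (m : ℤ) ((p : ℤ) ^ k)
    rw [hgcd] at h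
    exact_mod_cast h
  set c : ZpInfty p := Int.gcdA (m : ℤ) ((p : ℤ) ^ k) • a with hc
  have hpka : ((p : ℤ) ^ k) • a = 0 := by
    have h1 : ((p ^ k : ℕ) : ℤ) • a = (p ^ k) • a := natCast_zsmul a (p ^ k)
    rw [Nat.cast_pow] at h1
    rw [h1, hk]
  have hmc : m • c = a := by
    have h1 : m • c = ((m : ℤ) * Int.gcdA (m : ℤ) ((p : ℤ) ^ k)) • a := by
      rw [hc, ← natCast_zsmul c m, smul_smul]
    have h2 : (m : ℤ) * Int.gcdA (m : ℤ) ((p : ℤ) ^ k)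
        = 1 - (p : ℤ) ^ k * Int.gcdB (m : ℤ) ((p : ℤ) ^ k) := by linarith [hbez]
    rw [h1, h2, sub_smul, one_smul, mul_comm ((p : ℤ) ^ k), mul_smul, hpka, smul_zero, sub_zero]
  obtain ⟨b, hbb⟩ := ZpInfty_ppow_div p i c
  refine ⟨b, ?_⟩
  rw [← hnm, mul_comm (p ^ i) m, mul_smul, hbb, hmc]

end Prufer

section Prufer2

variable (p : ℕ) [Fact p.Prime]

lemma QModZ_pfin : Finite {q : QModZ // p • q = 0} := by
  have hp : p.Prime := Fact.out
  have hp0 : (p : ℚ) ≠ 0 := Nat.cast_ne_zero.mpr hp.pos.ne'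
  refine Finite.of_surjective (f := fun c : ZMod p =>
    (⟨QuotientAddGroup.mk ((c.val : ℚ) / p), ?_⟩ : {q : QModZ // p • q = 0})) ?_
  · rw [← QuotientAddGroup.mk_nsmul]
    rw [QuotientAddGroup.eq_zero_iff]
    refine AddSubgroup.mem_zmultiples_iff.mpr ⟨(c.val : ℤ), ?_⟩
    rw [zsmul_eq_mul, mul_one, nsmul_eq_mul]
    push_cast
    field_simp
  · rintro ⟨q, hq⟩
    obtain ⟨r, hr⟩ := QuotientAddGroup.mk_surjective q
    have h0 : ((p • r : ℚ) : QModZ) = 0 := by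
      rw [QuotientAddGroup.mk_nsmul, hr, hq]
    obtain ⟨j, hj⟩ := AddSubgroup.mem_zmultiples_iff.mp ((QuotientAddGroup.eq_zero_iff _).mp h0)
    rw [zsmul_eq_mul, mul_one] at hj
    have hrj : r = (j : ℚ) / p := by
      rw [nsmul_eq_mul] at hj
      field_simp at hj ⊢
      linarith [hj]
    refine ⟨(j : ZMod p), Subtype.ext ?_⟩
    show (QuotientAddGroup.mk (((j : ZMod p).val : ℚ) / p) : QModZ) = q
    rw [← hr, QuotientAddGroup.eq]
    have hdvd : (p : ℤ) ∣ j - ((j : ZMod p).val : ℤ) := by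
      rw [← ZMod.intCast_zmod_eq_zero_iff_dvd]
      push_cast
      simp
    obtain ⟨t, ht⟩ := hdvd
    refine AddSubgroup.mem_zmultiples_iff.mpr ⟨t, ?_⟩
    rw [zsmul_eq_mul, mul_one, hrj]
    have h3 : (j : ℚ) - (((j : ZMod p).val : ℕ) : ℚ) = (p : ℚ) * (t : ℚ) := by
      exact_mod_cast congrArg (fun z : ℤ => (z : ℚ)) ht
    have hv : ((((j : ZMod p).val : ℕ)) : ℚ) = (j : ℚ) - (p : ℚ) * t := by linarith
    rw [hv]
    field_simp
    ring

lemma ZpInfty_pfin : Finite {a : ZpInfty p // p • a = 0} := by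
  have := QModZ_pfin p
  refine Finite.of_injective (fun a : {a : ZpInfty p // p • a = 0} =>
    (⟨a.1.1, by
      show p • (a.1 : QModZ) = 0
      exact congrArg Subtype.val a.2⟩ : {q : QModZ // p • q = 0})) ?_
  intro x y h
  have h2 := congrArg (Subtype.val (p := fun q : QModZ => p • q = 0)) h
  exact Subtype.ext (Subtype.ext h2)

end Prufer2

/-- An endomorphism `φ` of a direct sum of `d` copies of `ℤ(p^∞)` with finite Reidemeister
number (i.e. finite cokernel of `1 - φ`) has a finite fixed-point subgroup. -/
theorem fixedPoints_finite_of_prufer_power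
    (p : ℕ) [Fact p.Prime] (d : ℕ)
    (φ : (Fin d → ZpInfty p) →+ (Fin d → ZpInfty p))
    (hR : Finite ((Fin d → ZpInfty p) ⧸ (AddMonoidHom.id (Fin d → ZpInfty p) - φ).range)) :
    Finite {a : Fin d → ZpInfty p // φ a = a} := by
  classical
  have hp : p.Prime := Fact.out
  set ψ := AddMonoidHom.id (Fin d → ZpInfty p) - φ with hψ
  have htor : ∀ x : Fin d → ZpInfty p, ∃ n, p ^ n • x = 0 := by
    intro x
    choose k hk using fun i => ZpInfty_tor p (x i)
    refine ⟨Finset.univ.sup k, funext fun i => ?_⟩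
    have hle : k i ≤ Finset.univ.sup k := Finset.le_sup (Finset.mem_univ i)
    show p ^ Finset.univ.sup k • x i = 0
    calc p ^ Finset.univ.sup k • x i
        = p ^ (Finset.univ.sup k - k i) • p ^ k i • x i := by
          rw [smul_smul, ← pow_add, Nat.sub_add_cancel hle]
      _ = 0 := by rw [hk i, smul_zero]
  have hdiv : ∀ n : ℕ, 0 < n → ∀ x : Fin d → ZpInfty p, ∃ y, n • y = x := by
    intro n hn x
    choose y hy using fun i => ZpInfty_div p n hn (x i)
    exact ⟨y, funext fun i => hy i⟩
  have hfin : Finite {x : Fin d → ZpInfty p // p • x = 0} := by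
    have := ZpInfty_pfin p
    refine Finite.of_injective (fun x : {x : Fin d → ZpInfty p // p • x = 0} =>
      (fun i => (⟨x.1 i, congrFun x.2 i⟩ : {a : ZpInfty p // p • a = 0}))) ?_
    intro x y h
    refine Subtype.ext (funext fun i => ?_)
    exact congrArg (Subtype.val (p := fun a : ZpInfty p => p • a = 0)) (congrFun h i)
  have hker := addKer_finite_of_coker_finite p hp.pos htor hdiv hfin ψ hR
  refine Finite.of_injective (fun a : {a : Fin d → ZpInfty p // φ a = a} =>
    (⟨a.1, ?_⟩ : ψ.ker)) ?_
  · rw [AddMonoidHom.mem_ker, hψ, AddMonoidHom.sub_apply, AddMonoidHom.id_apply, a.2, sub_self]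
  · intro x y h
    exact Subtype.ext (congrArg (Subtype.val (p := fun z => z ∈ ψ.ker)) h)
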